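/- Let V ⊆ ℂⁿ be an isotropic subspace, and let v ∈ V and w ∈ ℂⁿ with w ∉ V^⊥ be vectors such that ⟨v,w⟩ is purely imaginary. Then there exists an endomorphism N of ℂⁿ with N* = −N and N² = 0 such that N vanishes on V^⊥, the image of N is contained in V, and N(w) = v. -/

import Mathlib

set_option synthInstance.maxHeartbeats 1000000
set_option maxHeartbeats 1000000

open scoped Matrix ComplexConjugate

/-- The matrix `s = diag(-I_p, I_q)`. -/
noncomputable def sMat (p q : ℕ) : Matrix (Fin (p + q)) (Fin (p + q)) ℂ :=
  Matrix.diagonal fun i => if (i : ℕ) < p then (-1 : ℂ) else 1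

/-- The Hermitian form `⟨v,w⟩ = -∑_{i<p} conj(v_i) w_i + ∑_{i≥p} conj(v_i) w_i`
of signature `(p,q)` on `ℂⁿ`, `n = p + q`. -/
noncomputable def herm (p q : ℕ) (v w : Fin (p + q) → ℂ) : ℂ :=
  dotProduct (star v) ((sMat p q).mulVec w)

/-- The adjoint `A* = s Aᴴ s` of a matrix with respect to the form `herm p q`. -/
noncomputable def adjUpq (p q : ℕ) (A : Matrix (Fin (p + q)) (Fin (p + q)) ℂ) :
    Matrix (Fin (p + q)) (Fin (p + q)) ℂ :=
  sMat p q * Aᴴ * sMat p q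

/-- A subspace is isotropic for the form `herm p q`. -/
def IsIsotropic (p q : ℕ) (V : Submodule ℂ (Fin (p + q) → ℂ)) : Prop :=
  ∀ v ∈ V, ∀ w ∈ V, herm p q v w = 0

/-- The rank one building block `a ⟨c, ·⟩`. -/
noncomputable def mMat (p q : ℕ) (a c : Fin (p + q) → ℂ) :
    Matrix (Fin (p + q)) (Fin (p + q)) ℂ :=
  Matrix.vecMulVec a (star c) * sMat p q

lemma vecMulVec_mulVec' {n : ℕ} (a c u : Fin n → ℂ) :
    (Matrix.vecMulVec a c).mulVec u = (dotProduct c u) • a := by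
  ext i
  simp only [Matrix.mulVec, dotProduct, Matrix.vecMulVec_apply, Pi.smul_apply,
    smul_eq_mul, Finset.sum_mul]
  exact Finset.sum_congr rfl fun j _ => by ring

lemma mMat_mulVec (p q : ℕ) (a c u : Fin (p + q) → ℂ) :
    (mMat p q a c).mulVec u = herm p q c u • a := by
  rw [mMat, ← Matrix.mulVec_mulVec, vecMulVec_mulVec']
  rfl

lemma adjUpq_mMat (p q : ℕ) (a c : Fin (p + q) → ℂ) :
    adjUpq p q (mMat p q a c) = mMat p q c a := by
  ext i j
  by_cases hi : (i : ℕ) < p <;> by_cases hj : (j : ℕ) < p <;>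
    simp [adjUpq, mMat, sMat, Matrix.mul_diagonal, Matrix.diagonal_mul,
      Matrix.conjTranspose_apply, Matrix.vecMulVec_apply, hi, hj] <;> ring

lemma herm_smul_left (p q : ℕ) (k : ℂ) (x u : Fin (p + q) → ℂ) :
    herm p q (k • x) u = conj k * herm p q x u := by
  rw [herm, herm, star_smul, smul_dotProduct]
  rw [smul_eq_mul, starRingEnd_apply]

lemma herm_add_right (p q : ℕ) (x u u' : Fin (p + q) → ℂ) :
    herm p q x (u + u') = herm p q x u + herm p q x u' := by
  simp [herm, Matrix.mulVec_add, dotProduct_add]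

lemma herm_sub_right (p q : ℕ) (x u u' : Fin (p + q) → ℂ) :
    herm p q x (u - u') = herm p q x u - herm p q x u' := by
  simp [herm, Matrix.mulVec_sub, dotProduct_sub]

lemma herm_smul_right (p q : ℕ) (k : ℂ) (x u : Fin (p + q) → ℂ) :
    herm p q x (k • u) = k * herm p q x u := by
  simp [herm, Matrix.mulVec_smul, dotProduct_smul]

/-- **Lemma 4.2 (second part).**  Given an isotropic subspace `V`, a vector `v ∈ V` and a
vector `w ∉ V^⊥` with `⟨v,w⟩` purely imaginary, there is a skew-adjoint two-step
nilpotent `N` with `N(V^⊥) = 0`, `im N ⊆ V` and `N w = v`. -/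
theorem exists_skew_two_step_nilpotent (p q : ℕ) (V : Submodule ℂ (Fin (p + q) → ℂ))
    (hV : IsIsotropic p q V) (v w : Fin (p + q) → ℂ) (hv : v ∈ V)
    (hw : ∃ x ∈ V, herm p q x w ≠ 0) (hvw : (herm p q v w).re = 0) :
    ∃ N : Matrix (Fin (p + q)) (Fin (p + q)) ℂ,
      adjUpq p q N = -N ∧ N * N = 0 ∧
      (∀ u : Fin (p + q) → ℂ, (∀ x ∈ V, herm p q x u = 0) → N.mulVec u = 0) ∧
      (∀ u : Fin (p + q) → ℂ, N.mulVec u ∈ V) ∧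
      N.mulVec w = v := by
  obtain ⟨x, hx, hc⟩ := hw
  set c : ℂ := herm p q x w with hcdef
  set d : ℂ := herm p q v w with hddef
  have hd : conj d = -d := by
    apply Complex.ext <;> simp [hvw]
  set b : Fin (p + q) → ℂ := c⁻¹ • v with hbdef
  have hb : b ∈ V := V.smul_mem _ hv
  set μ : ℂ := d * (c * conj c)⁻¹ with hμdef
  have hμ : conj μ = -μ := by
    rw [hμdef, map_mul, map_inv₀, map_mul, hd, Complex.conj_conj]
    ring
  set N : Matrix (Fin (p + q)) (Fin (p + q)) ℂ :=
    mMat p q b x - mMat p q x b + μ • mMat p q x x with hNdef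
  have hNu : ∀ u, N.mulVec u =
      herm p q x u • b - herm p q b u • x + μ • (herm p q x u • x) := by
    intro u
    rw [hNdef]
    simp [Matrix.add_mulVec, Matrix.sub_mulVec, Matrix.smul_mulVec, mMat_mulVec]
  refine ⟨N, ?_, ?_, ?_, ?_, ?_⟩
  · -- skew-adjoint
    have : adjUpq p q N = mMat p q x b - mMat p q b x + conj μ • mMat p q x x := by
      rw [hNdef, adjUpq]
      simp only [Matrix.conjTranspose_add, Matrix.conjTranspose_sub,
        Matrix.conjTranspose_smul, Matrix.mul_add, Matrix.add_mul, Matrix.mul_sub,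
        Matrix.sub_mul, Matrix.mul_smul, Matrix.smul_mul]
      have h1 := adjUpq_mMat p q b x
      have h2 := adjUpq_mMat p q x b
      have h3 := adjUpq_mMat p q x x
      rw [adjUpq] at h1 h2 h3
      rw [h1, h2, h3, starRingEnd_apply]
    rw [this, hμ, hNdef, neg_smul]
    abel
  · -- N² = 0
    have hnil : ∀ u, N.mulVec (N.mulVec u) = 0 := by
      intro u
      rw [hNu u, hNu]
      have hxb := hV x hx b hb
      have hxx := hV x hx x hx
      have hbb := hV b hb b hb
      have hbx := hV b hb x hx
      simp [herm_add_right, herm_sub_right, herm_smul_right, hxb, hxx, hbb, hbx]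
    ext i j
    have := congrFun (hnil (Pi.single j 1)) i
    rw [Matrix.mulVec_mulVec] at this
    simpa [Matrix.mulVec_single] using this
  · -- vanishes on V^⊥
    intro u hu
    rw [hNu u, hu x hx, hu b hb]
    simp
  · -- image in V
    intro u
    rw [hNu u]
    exact V.add_mem (V.sub_mem (V.smul_mem _ hb) (V.smul_mem _ hx))
      (V.smul_mem _ (V.smul_mem _ hx))
  · -- N w = v
    rw [hNu w, ← hcdef]
    have hbw : herm p q b w = (conj c)⁻¹ * d := by
      rw [hbdef, herm_smul_left, map_inv₀, ← hddef]
    have hcc : conj c ≠ 0 := star_ne_zero.mpr hc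
    have hkey : μ * c = (conj c)⁻¹ * d := by
      rw [hμdef]
      field_simp
    rw [hbw, smul_smul, smul_smul, mul_inv_cancel₀ hc, one_smul, hkey]
    abel
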